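/- The generating function of directed convex permutominoes, B(1,t) + (1/2)·R(1,t) with B(1,t) = t/(1−2t) and R(1,t) = 1/√(1−4t) − 1/(1−2t), equals (1−√(1−4t))/(2√(1−4t)), and its coefficient of t^n is (1/2)·C(2n,n) for n ≥ 1. -/

import Mathlib

open PowerSeries

/-- The generating function of directed convex permutominoes, `B(1,t) + (1/2)·R(1,t)`
with `B(1,t) = t/(1−2t)` and `R(1,t) = 1/√(1−4t) − 1/(1−2t)`, equals
`(1−√(1−4t))/(2√(1−4t))`, and its coefficient of `t^n` is `C(2n,n)/2` for `n ≥ 1`. -/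
theorem directed_convex_gf (sq : PowerSeries ℚ) (hsq : sq ^ 2 = 1 - 4 * X)
    (hsq0 : constantCoeff sq = 1) :
    X * (1 - 2 * X)⁻¹ + C (1 / 2 : ℚ) * (sq⁻¹ - (1 - 2 * X)⁻¹)
      = (1 - sq) * (2 * sq)⁻¹ ∧
    ∀ n : ℕ, 1 ≤ n →
      coeff n ((1 - sq) * (2 * sq)⁻¹) = ((2 * n).choose n : ℚ) / 2 := by
  have h0 : constantCoeff sq ≠ 0 := by rw [hsq0]; norm_num
  have hsqinv : sq * sq⁻¹ = 1 := PowerSeries.mul_inv_cancel _ h0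
  have h2 : constantCoeff (1 - 2 * X : PowerSeries ℚ) ≠ 0 := by simp
  have h2inv : (1 - 2 * X : PowerSeries ℚ) * (1 - 2 * X)⁻¹ = 1 :=
    PowerSeries.mul_inv_cancel _ h2
  have h2C : (2 : PowerSeries ℚ) = C 2 := (map_ofNat (C) 2).symm
  have h4C : (4 : PowerSeries ℚ) = C 4 := (map_ofNat (C) 4).symm
  have hhalf : (C (1 / 2 : ℚ)) * 2 = 1 := by
    rw [h2C, ← map_mul]; norm_num
  have h2s : constantCoeff (2 * sq : PowerSeries ℚ) ≠ 0 := by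
    rw [map_mul, map_ofNat, hsq0]; norm_num
  have e1 : (2 * sq : PowerSeries ℚ)⁻¹ = C (1 / 2) * sq⁻¹ := by
    rw [PowerSeries.inv_eq_iff_mul_eq_one h2s]
    linear_combination hsqinv + (sq⁻¹ * sq) * hhalf
  have e2 : (1 - sq) * (2 * sq)⁻¹ = C (1 / 2) * sq⁻¹ - C (1 / 2) := by
    rw [e1]
    linear_combination (- C (1/2)) * hsqinv
  constructor
  · rw [e2]
    linear_combination (- C (1/2)) * h2inv - (X * (1 - 2*X)⁻¹) * hhalf
  · -- coefficient part
    have hD : sq * (d⁄dX ℚ sq) = -2 := by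
      have h := congrArg (⇑(d⁄dX ℚ)) hsq
      rw [pow_two, Derivation.leibniz] at h
      simp only [smul_eq_mul, map_sub, Derivation.map_one_eq_zero, Derivation.leibniz,
        derivative_X, mul_one] at h
      have h4 : (d⁄dX ℚ) (4 : PowerSeries ℚ) = 0 := by rw [h4C, derivative_C]
      rw [h4] at h
      have hc : sq * (d⁄dX ℚ) sq + sq * (d⁄dX ℚ) sq = -4 := by
        linear_combination h
      have : (2 : PowerSeries ℚ) ≠ 0 := by
        intro hcon
        have := congrArg (constantCoeff) hcon
        rw [map_ofNat, map_zero] at this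
        norm_num at this
      apply mul_left_cancel₀ this
      linear_combination hc
    have hsqne : sq ≠ 0 := by
      intro hcon; rw [hcon] at hsq0; simp at hsq0
    have hrec : (1 - 4 * X) * (d⁄dX ℚ sq⁻¹) = 2 * sq⁻¹ := by
      apply mul_left_cancel₀ hsqne
      rw [derivative_inv']
      linear_combination (-2 * sq⁻¹^2) * hsq + (2 * sq * sq⁻¹) * hsqinv +
        (-(1 - 4*X) * sq⁻¹^2) * hD
    have hXD : ∀ n : ℕ, coeff n (X * d⁄dX ℚ sq⁻¹) = n * coeff n sq⁻¹ := by
      intro n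
      cases n with
      | zero => simp
      | succ m =>
        rw [coeff_succ_X_mul, coeff_derivative]
        push_cast
        ring
    have hcoeff : ∀ n : ℕ, coeff n sq⁻¹ = ((2 * n).choose n : ℚ) := by
      intro n
      induction n with
      | zero =>
        rw [PowerSeries.coeff_zero_eq_constantCoeff, PowerSeries.constantCoeff_inv, hsq0]
        norm_num
      | succ m ih =>
        have hstep := congrArg (coeff m) hrec
        rw [show (1 - 4 * X) * (d⁄dX ℚ sq⁻¹)
              = d⁄dX ℚ sq⁻¹ - (C 4) * (X * d⁄dX ℚ sq⁻¹) by rw [← h4C]; ring,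
          h2C, map_sub, coeff_C_mul, coeff_C_mul, hXD, coeff_derivative, ih] at hstep
        have hm1 : ((m : ℚ) + 1) ≠ 0 := by positivity
        have hcbq : ((m : ℚ) + 1) * ((2 * (m + 1)).choose (m + 1) : ℚ)
            = 2 * (2 * (m : ℚ) + 1) * ((2 * m).choose m : ℚ) := by
          have := Nat.succ_mul_centralBinom_succ m
          rw [Nat.centralBinom, Nat.centralBinom] at this
          exact_mod_cast this
        apply mul_left_cancel₀ hm1
        linear_combination hstep - hcbq
    intro n hn
    rw [e2, map_sub, coeff_C_mul, hcoeff, coeff_C, if_neg (by omega)]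
    ring
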